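/- Let T > 0, B > 0, and let ρ : [0,T] → ℝ be measurable with ρ(t) > 0 almost everywhere and ∫₀ᵀ ρ(t)^{1/2} dt finite and positive. Then the infimum, over all measurable w : [0,T] → ℝ with w(t) > 0 almost everywhere and ∫₀ᵀ w(t)^{−2} dt ≤ B, of the loss ∫₀ᵀ w(t)²·ρ(t) dt, equals (∫₀ᵀ ρ(s)^{1/2} ds)² / B, and it is attained at w*(t) = ( (∫₀ᵀ ρ(s)^{1/2} ds) / B )^{1/2} · ρ(t)^{−1/4}. -/

import Mathlib

open MeasureTheory Set ENNReal

/-- For a sampling density `ρ > 0` a.e. with `∫₀ᵀ ρ^{1/2}` finite and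
positive, the infimum of the loss `∫₀ᵀ w² ρ` (Lebesgue lower integral) over measurable
a.e.-positive `w` with budget `∫₀ᵀ w⁻² ≤ B` equals `(∫₀ᵀ ρ^{1/2})²/B`, attained at
`w* t = ((∫₀ᵀ ρ^{1/2})/B)^{1/2} ρ t^{−1/4}`. -/
theorem stmt_9 (T B : ℝ) (hT : 0 < T) (hB : 0 < B) (ρ : ℝ → ℝ) (hρ : Measurable ρ)
    (hρpos : ∀ᵐ t ∂(volume.restrict (Icc (0:ℝ) T)), 0 < ρ t)
    (hint : IntegrableOn (fun t => ρ t ^ ((1:ℝ)/2)) (Icc 0 T))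
    (hpos : 0 < ∫ s in (0:ℝ)..T, ρ s ^ ((1:ℝ)/2)) :
    IsLeast {y : ℝ≥0∞ | ∃ w : ℝ → ℝ, Measurable w ∧
        (∀ᵐ t ∂(volume.restrict (Icc (0:ℝ) T)), 0 < w t) ∧
        (∫⁻ t in Icc (0:ℝ) T, ENNReal.ofReal ((w t ^ 2)⁻¹)) ≤ ENNReal.ofReal B ∧
        y = ∫⁻ t in Icc (0:ℝ) T, ENNReal.ofReal (w t ^ 2 * ρ t)}
      (ENNReal.ofReal ((∫ s in (0:ℝ)..T, ρ s ^ ((1:ℝ)/2)) ^ 2 / B)) ∧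
    ∀ w : ℝ → ℝ,
      (∀ t, w t = ((∫ s in (0:ℝ)..T, ρ s ^ ((1:ℝ)/2)) / B) ^ ((1:ℝ)/2) * ρ t ^ (-(1:ℝ)/4)) →
      ((∫⁻ t in Icc (0:ℝ) T, ENNReal.ofReal ((w t ^ 2)⁻¹)) ≤ ENNReal.ofReal B ∧
        (∫⁻ t in Icc (0:ℝ) T, ENNReal.ofReal (w t ^ 2 * ρ t)) =
          ENNReal.ofReal ((∫ s in (0:ℝ)..T, ρ s ^ ((1:ℝ)/2)) ^ 2 / B)) := by
  set I : ℝ := ∫ s in (0:ℝ)..T, ρ s ^ ((1:ℝ)/2) with hIdef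
  have hIpos : 0 < I := hpos
  have hmρh : Measurable fun t => ρ t ^ ((1:ℝ)/2) := by measurability
  have hnn : 0 ≤ᵐ[volume.restrict (Icc (0:ℝ) T)] fun t => ρ t ^ ((1:ℝ)/2) :=
    hρpos.mono fun t ht => Real.rpow_nonneg ht.le _
  -- The lower Lebesgue integral of ρ^{1/2} over [0,T] equals ofReal I
  have hIl : (∫⁻ t in Icc (0:ℝ) T, ENNReal.ofReal (ρ t ^ ((1:ℝ)/2))) = ENNReal.ofReal I := by
    rw [← MeasureTheory.ofReal_integral_eq_lintegral_ofReal hint hnn]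
    congr 1
    rw [hIdef, intervalIntegral.integral_of_le hT.le, ← integral_Icc_eq_integral_Ioc]
  -- Attainment at w*
  have hAtt : ∀ w : ℝ → ℝ,
      (∀ t, w t = (I / B) ^ ((1:ℝ)/2) * ρ t ^ (-(1:ℝ)/4)) →
      ((∫⁻ t in Icc (0:ℝ) T, ENNReal.ofReal ((w t ^ 2)⁻¹)) ≤ ENNReal.ofReal B ∧
        (∫⁻ t in Icc (0:ℝ) T, ENNReal.ofReal (w t ^ 2 * ρ t)) =
          ENNReal.ofReal (I ^ 2 / B)) := by
    intro w hw
    have hIB : (0:ℝ) < I / B := div_pos hIpos hB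
    have hc2 : ((I / B) ^ ((1:ℝ)/2)) ^ 2 = I / B := by
      rw [← Real.rpow_natCast ((I / B) ^ ((1:ℝ)/2)) 2, ← Real.rpow_mul hIB.le]
      norm_num
    have hsq : ∀ᵐ t ∂(volume.restrict (Icc (0:ℝ) T)),
        w t ^ 2 = (I / B) * ρ t ^ (-(1:ℝ)/2) := by
      filter_upwards [hρpos] with t ht
      rw [hw t, mul_pow, hc2, ← Real.rpow_natCast (ρ t ^ (-(1:ℝ)/4)) 2,
        ← Real.rpow_mul ht.le]
      norm_num
    constructor
    · -- budget is exactly B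
      have hcong : (∫⁻ t in Icc (0:ℝ) T, ENNReal.ofReal ((w t ^ 2)⁻¹)) =
          ∫⁻ t in Icc (0:ℝ) T, ENNReal.ofReal (B / I) * ENNReal.ofReal (ρ t ^ ((1:ℝ)/2)) := by
        refine lintegral_congr_ae ?_
        filter_upwards [hρpos, hsq] with t ht hsqt
        rw [hsqt, ← ENNReal.ofReal_mul (div_nonneg hB.le hIpos.le)]
        congr 1
        rw [mul_inv, ← Real.rpow_neg ht.le]
        have : -(-(1:ℝ)/2) = (1:ℝ)/2 := by norm_num
        rw [this]
        field_simp
      rw [hcong, lintegral_const_mul' _ _ ENNReal.ofReal_ne_top, hIl,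
        ← ENNReal.ofReal_mul (div_nonneg hB.le hIpos.le),
        div_mul_cancel₀ B hIpos.ne']
    · -- loss is exactly I²/B
      have hcong : (∫⁻ t in Icc (0:ℝ) T, ENNReal.ofReal (w t ^ 2 * ρ t)) =
          ∫⁻ t in Icc (0:ℝ) T, ENNReal.ofReal (I / B) * ENNReal.ofReal (ρ t ^ ((1:ℝ)/2)) := by
        refine lintegral_congr_ae ?_
        filter_upwards [hρpos, hsq] with t ht hsqt
        rw [hsqt, ← ENNReal.ofReal_mul hIB.le]
        congr 1
        rw [mul_assoc]
        congr 1
        nth_rewrite 2 [← Real.rpow_one (ρ t)]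
        rw [← Real.rpow_add ht]
        norm_num
      rw [hcong, lintegral_const_mul' _ _ ENNReal.ofReal_ne_top, hIl,
        ← ENNReal.ofReal_mul hIB.le]
      congr 1
      field_simp
  refine ⟨⟨?_, ?_⟩, hAtt⟩
  · -- membership : attained at w*
    refine ⟨fun t => (I / B) ^ ((1:ℝ)/2) * ρ t ^ (-(1:ℝ)/4),
      (measurable_const.mul (by measurability : Measurable fun t => ρ t ^ (-(1:ℝ)/4))), ?_, (hAtt _ fun t => rfl).1,
      ((hAtt _ fun t => rfl).2).symm⟩
    filter_upwards [hρpos] with t ht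
    exact mul_pos (Real.rpow_pos_of_pos (div_pos hIpos hB) _) (Real.rpow_pos_of_pos ht _)
  · -- lower bound via Cauchy–Schwarz
    rintro y ⟨w, hwm, hwpos, hwbud, rfl⟩
    set μ := volume.restrict (Icc (0:ℝ) T)
    set L : ℝ≥0∞ := ∫⁻ t, ENNReal.ofReal (w t ^ 2 * ρ t) ∂μ with hLdef
    set f : ℝ → ℝ≥0∞ := fun t => ENNReal.ofReal (w t * ρ t ^ ((1:ℝ)/2)) with hfdef
    set g : ℝ → ℝ≥0∞ := fun t => ENNReal.ofReal ((w t)⁻¹) with hgdef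
    have hf : AEMeasurable f μ := ((hwm.mul hmρh).ennreal_ofReal).aemeasurable
    have hg : AEMeasurable g μ := ((hwm.inv).ennreal_ofReal).aemeasurable
    have hpq : Real.HolderConjugate 2 2 := Real.HolderConjugate.two_two
    have h2 : ∀ x : ℝ, x ^ (2:ℝ) = x ^ 2 := fun x => by
      rw [show (2:ℝ) = ((2:ℕ):ℝ) by norm_num, Real.rpow_natCast]
    have key := ENNReal.lintegral_mul_le_Lp_mul_Lq μ hpq hf hg
    -- identify ∫ f*g
    have hfg : (∫⁻ t, (f * g) t ∂μ) = ENNReal.ofReal I := by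
      rw [← hIl]
      refine lintegral_congr_ae ?_
      filter_upwards [hρpos, hwpos] with t hρt hwt
      simp only [Pi.mul_apply, hfdef, hgdef]
      rw [← ENNReal.ofReal_mul (mul_nonneg hwt.le (Real.rpow_nonneg hρt.le _))]
      congr 1
      field_simp
    -- identify ∫ f²
    have hf2 : (∫⁻ t, f t ^ (2:ℝ) ∂μ) = L := by
      refine lintegral_congr_ae ?_
      filter_upwards [hρpos, hwpos] with t hρt hwt
      rw [ENNReal.ofReal_rpow_of_nonneg
        (mul_nonneg hwt.le (Real.rpow_nonneg hρt.le _)) (by norm_num : (0:ℝ) ≤ 2)]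
      congr 1
      rw [h2, mul_pow, ← Real.rpow_natCast (ρ t ^ ((1:ℝ)/2)) 2, ← Real.rpow_mul hρt.le]
      norm_num
    -- bound ∫ g²
    have hg2 : (∫⁻ t, g t ^ (2:ℝ) ∂μ) ≤ ENNReal.ofReal B := by
      refine le_trans (le_of_eq ?_) hwbud
      refine lintegral_congr_ae ?_
      filter_upwards [hwpos] with t hwt
      rw [ENNReal.ofReal_rpow_of_nonneg (inv_nonneg.2 hwt.le) (by norm_num : (0:ℝ) ≤ 2)]
      congr 1
      rw [h2, inv_pow]
    rw [hfg, hf2] at key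
    have key2 : ENNReal.ofReal I ≤ (L * ENNReal.ofReal B) ^ ((1:ℝ)/2) := by
      calc ENNReal.ofReal I ≤ L ^ ((1:ℝ)/2) * (∫⁻ t, g t ^ (2:ℝ) ∂μ) ^ ((1:ℝ)/2) := key
        _ ≤ L ^ ((1:ℝ)/2) * (ENNReal.ofReal B) ^ ((1:ℝ)/2) :=
            mul_le_mul_right (ENNReal.rpow_le_rpow hg2 (by norm_num)) _
        _ = (L * ENNReal.ofReal B) ^ ((1:ℝ)/2) :=
            (ENNReal.mul_rpow_of_nonneg _ _ (by norm_num)).symm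
    have key3 : ENNReal.ofReal (I ^ 2) ≤ L * ENNReal.ofReal B := by
      have := ENNReal.rpow_le_rpow key2 (le_of_lt (by norm_num : (0:ℝ) < 2))
      rw [← ENNReal.rpow_mul] at this
      norm_num at this
      calc ENNReal.ofReal (I ^ 2) = ENNReal.ofReal I ^ 2 := ENNReal.ofReal_pow hIpos.le 2
        _ ≤ L * ENNReal.ofReal B := this
    rw [ENNReal.ofReal_div_of_pos hB]
    exact ENNReal.div_le_of_le_mul key3
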